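/- arXiv:2008.07968 — 3 statements merged into one kernel-verified Lean document; each statement's English description precedes it below -/
import Mathlib

section
/- Let σ:[n]→[n] and π:[k]→[k] be two permutations. Then σ contains π if and only if there is a function f:S_π→S_σ such that for every p∈S_π: f(N^L(p)).x < f(p).x < f(N^R(p)).x and f(N^D(p)).y < f(p).y < f(N^U(p)).y, whenever the corresponding neighbor of p is defined. -/
private lemma strictMono_of_adj {k : ℕ} {α : Type*} [Preorder α] (g : Fin k → α)
    (h : ∀ (x : Fin k) (hx : (x : ℕ) + 1 < k), g x < g ⟨(x : ℕ) + 1, hx⟩) :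
    StrictMono g := by
  intro a b hab
  have key : ∀ m (hm : m < k), (a : ℕ) < m → g a < g ⟨m, hm⟩ := by
    intro m
    induction m with
    | zero => omega
    | succ p ih =>
      intro hm hap
      rcases Nat.lt_or_ge (a : ℕ) p with hc | hc
      · exact lt_trans (ih (Nat.lt_of_succ_lt hm) hc) (h ⟨p, Nat.lt_of_succ_lt hm⟩ hm)
      · have ha : (a : ℕ) = p := by omega
        have h' := h a (by omega)
        have he : (⟨(a : ℕ) + 1, by omega⟩ : Fin k) = ⟨p + 1, hm⟩ := by simp [ha]
        rwa [he] at h'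
  have := key (b : ℕ) b.isLt hab
  simpa using this


/-- A permutation `σ` of length `n` contains a permutation `π` of length `k` if there is
a strictly increasing map `f : [k] → [n]` such that `π i < π j ↔ σ (f i) < σ (f j)` for
all `i, j`. -/
def PermContains {n k : ℕ} (σ : Equiv.Perm (Fin n)) (π : Equiv.Perm (Fin k)) : Prop :=
  ∃ f : Fin k → Fin n, StrictMono f ∧ ∀ i j : Fin k, π i < π j ↔ σ (f i) < σ (f j)

/-- The point set `S_π = {(i, π i) : i ∈ [k]}` of a permutation `π`. -/
def pointSet {k : ℕ} (π : Equiv.Perm (Fin k)) : Set (Fin k × Fin k) :=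
  {p | p.2 = π p.1}

/-- The point `(i, π i)` of `S_π`. -/
def pt {k : ℕ} (π : Equiv.Perm (Fin k)) (i : Fin k) : ↥(pointSet π) :=
  ⟨(i, π i), rfl⟩

/-- `f : S_π → S_σ` satisfies, for every point `p ∈ S_π`, the four inequalities
`f(N^L(p)).x < f(p).x < f(N^R(p)).x` and `f(N^D(p)).y < f(p).y < f(N^U(p)).y`, whenever the
corresponding neighbor of `p` is defined.  (A point `p = (x, y) ∈ S_π` is `pt π x`; its
right/left neighbors are `pt π (x ± 1)` and its up/down neighbors are `pt π (π⁻¹ (y ± 1))`.) -/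
def IsGuide {n k : ℕ} (σ : Equiv.Perm (Fin n)) (π : Equiv.Perm (Fin k))
    (f : ↥(pointSet π) → ↥(pointSet σ)) : Prop :=
  -- `f(p).x < f(N^R(p)).x` whenever `N^R(p)` is defined
  (∀ (x : Fin k) (h : (x : ℕ) + 1 < k),
      (f (pt π x)).1.1 < (f (pt π ⟨(x : ℕ) + 1, h⟩)).1.1) ∧
  -- `f(N^L(p)).x < f(p).x` whenever `N^L(p)` is defined
  (∀ (x : Fin k), 0 < (x : ℕ) →
      (f (pt π ⟨(x : ℕ) - 1, lt_of_le_of_lt (Nat.sub_le _ _) x.isLt⟩)).1.1 <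
        (f (pt π x)).1.1) ∧
  -- `f(p).y < f(N^U(p)).y` whenever `N^U(p)` is defined
  (∀ (y : Fin k) (h : (y : ℕ) + 1 < k),
      (f (pt π (π⁻¹ y))).1.2 < (f (pt π (π⁻¹ ⟨(y : ℕ) + 1, h⟩))).1.2) ∧
  -- `f(N^D(p)).y < f(p).y` whenever `N^D(p)` is defined
  (∀ (y : Fin k), 0 < (y : ℕ) →
      (f (pt π (π⁻¹ ⟨(y : ℕ) - 1, lt_of_le_of_lt (Nat.sub_le _ _) y.isLt⟩))).1.2 <
        (f (pt π (π⁻¹ y))).1.2)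

/-- `σ` contains `π` iff there is a function `f : S_π → S_σ` satisfying
`f(N^L(p)).x < f(p).x < f(N^R(p)).x` and `f(N^D(p)).y < f(p).y < f(N^U(p)).y` for every
`p ∈ S_π`, whenever the corresponding neighbor of `p` is defined. -/
theorem permContains_iff_guide {n k : ℕ} (σ : Equiv.Perm (Fin n)) (π : Equiv.Perm (Fin k)) :
    PermContains σ π ↔ ∃ f : ↥(pointSet π) → ↥(pointSet σ), IsGuide σ π f := by
  constructor
  · rintro ⟨f, hmono, hiff⟩
    refine ⟨fun p => pt σ (f p.1.1), ?_, ?_, ?_, ?_⟩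
    · intro x h
      exact hmono (show x < ⟨(x : ℕ) + 1, h⟩ from Nat.lt_succ_self _)
    · intro x hx
      exact hmono (show (⟨(x : ℕ) - 1, _⟩ : Fin k) < x from by
        simp only [Fin.lt_def]; omega)
    · intro y h
      refine (hiff _ _).mp ?_
      simp only [pt, Equiv.Perm.coe_inv, Equiv.apply_symm_apply, Fin.lt_def]
      exact Nat.lt_succ_self _
    · intro y hy
      refine (hiff _ _).mp ?_
      simp only [pt, Equiv.Perm.coe_inv, Equiv.apply_symm_apply, Fin.lt_def]
      omega
  · rintro ⟨g, hR, _, hU, _⟩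
    set F : Fin k → Fin n := fun x => (g (pt π x)).1.1 with hF
    have hy : ∀ x : Fin k, (g (pt π x)).1.2 = σ (F x) := fun x => (g (pt π x)).2
    have hFmono : StrictMono F := strictMono_of_adj F hR
    have hGmono : StrictMono (fun y : Fin k => σ (F (π⁻¹ y))) := by
      apply strictMono_of_adj
      intro y h
      have := hU y h
      rwa [hy, hy] at this
    refine ⟨F, hFmono, fun i j => ?_⟩
    have := hGmono.lt_iff_lt (a := π i) (b := π j)
    simpa using this.symm
end

section
/- Let σ:[n]→[n] and π:[k]→[k] be two permutations. The functions f:S_π→S_σ satisfying, for every p∈S_π, the inequalities f(N^L(p)).x < f(p).x < f(N^R(p)).x and f(N^D(p)).y < f(p).y < f(N^U(p)).y (whenever the corresponding neighbor is defined) are in one-to-one correspondence with the occurrences of π in σ. In particular, the number of such functions f equals the number of occurrences of π in σ. -/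
/-- An occurrence of `π` in `σ`: a strictly increasing map `g : [k] → [n]` such that
`π i < π j ↔ σ (g i) < σ (g j)` for all `i, j`. -/
def IsOccurrence {n k : ℕ} (σ : Equiv.Perm (Fin n)) (π : Equiv.Perm (Fin k))
    (g : Fin k → Fin n) : Prop :=
  StrictMono g ∧ ∀ i j : Fin k, π i < π j ↔ σ (g i) < σ (g j)


/-- Auxiliary: strict monotonicity from consecutive comparisons on `Fin k`. -/
lemma strictMono_of_succ_aux {k : ℕ} {α : Type*} [Preorder α] {g : Fin k → α}
    (h : ∀ (x : ℕ) (hx : x + 1 < k), g ⟨x, Nat.lt_of_succ_lt hx⟩ < g ⟨x + 1, hx⟩) :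
    StrictMono g := by
  intro i j hij
  obtain ⟨i, hi⟩ := i; obtain ⟨j, hj⟩ := j
  simp only [Fin.mk_lt_mk] at hij
  induction j with
  | zero => omega
  | succ m ih =>
    rcases Nat.lt_or_ge i m with h' | h'
    · exact lt_trans (ih (Nat.lt_of_succ_lt hj) h') (h m hj)
    · have : i = m := by omega
      subst this
      exact h i hj

lemma pt_eq_self {k : ℕ} (π : Equiv.Perm (Fin k)) (p : ↥(pointSet π)) :
    pt π p.1.1 = p := by
  obtain ⟨⟨x, y⟩, h⟩ := p
  have h' : y = π x := h
  subst h'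
  rfl

lemma isOcc_of_guide {n k : ℕ} (σ : Equiv.Perm (Fin n)) (π : Equiv.Perm (Fin k))
    (f : ↥(pointSet π) → ↥(pointSet σ)) (hf : IsGuide σ π f) :
    IsOccurrence σ π (fun i => (f (pt π i)).1.1) := by
  obtain ⟨h1, h2, h3, h4⟩ := hf
  have hsnd : ∀ p : ↥(pointSet π), (f p).1.2 = σ (f p).1.1 := fun p => (f p).2
  have hg : StrictMono (fun i : Fin k => (f (pt π i)).1.1) :=
    strictMono_of_succ_aux (fun x hx => h1 ⟨x, Nat.lt_of_succ_lt hx⟩ hx)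
  have hG : StrictMono (fun y : Fin k => (f (pt π (π⁻¹ y))).1.2) :=
    strictMono_of_succ_aux (fun y hy => h3 ⟨y, Nat.lt_of_succ_lt hy⟩ hy)
  refine ⟨hg, fun i j => ⟨fun hij => ?_, fun hij => ?_⟩⟩
  · have := hG hij
    simp only [Equiv.Perm.coe_inv, Equiv.symm_apply_apply] at this
    rwa [hsnd, hsnd] at this
  · by_contra hn
    push_neg at hn
    rcases lt_or_eq_of_le hn with h' | h'
    · have := hG h'
      simp only [Equiv.Perm.coe_inv, Equiv.symm_apply_apply] at this
      rw [hsnd, hsnd] at this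
      exact absurd hij (not_lt_of_gt this)
    · have : j = i := π.injective h'
      subst this
      exact lt_irrefl _ hij

def fOfOcc {n k : ℕ} (σ : Equiv.Perm (Fin n)) (π : Equiv.Perm (Fin k))
    (g : Fin k → Fin n) : ↥(pointSet π) → ↥(pointSet σ) :=
  fun p => ⟨(g p.1.1, σ (g p.1.1)), rfl⟩

lemma isGuide_fOfOcc {n k : ℕ} (σ : Equiv.Perm (Fin n)) (π : Equiv.Perm (Fin k))
    (g : Fin k → Fin n) (hg : IsOccurrence σ π g) : IsGuide σ π (fOfOcc σ π g) := by
  obtain ⟨hmono, hiff⟩ := hg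
  refine ⟨fun x h => ?_, fun x hx => ?_, fun y h => ?_, fun y hy => ?_⟩
  · exact hmono (show x < ⟨(x : ℕ) + 1, h⟩ from Fin.lt_def.2 (Nat.lt_succ_self _))
  · exact hmono (show (⟨(x : ℕ) - 1, _⟩ : Fin k) < x from Fin.lt_def.2 (Nat.sub_lt hx one_pos))
  · exact (hiff (π⁻¹ y) (π⁻¹ ⟨(y : ℕ) + 1, h⟩)).1
      (by simp only [Equiv.Perm.coe_inv, Equiv.apply_symm_apply]; exact Fin.lt_def.2 (Nat.lt_succ_self _))
  · exact (hiff (π⁻¹ ⟨(y : ℕ) - 1, _⟩) (π⁻¹ y)).1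
      (by simp only [Equiv.Perm.coe_inv, Equiv.apply_symm_apply]; exact Fin.lt_def.2 (Nat.sub_lt hy one_pos))

/-- The functions `f : S_π → S_σ` satisfying the neighbor inequalities are in one-to-one
correspondence with the occurrences of `π` in `σ` (namely, the occurrence corresponding to
`f` sends `i` to the `x`-coordinate of `f (i, π i)`); in particular, the number of such
functions equals the number of occurrences of `π` in `σ`. -/
theorem guide_equiv_occurrences {n k : ℕ} (σ : Equiv.Perm (Fin n)) (π : Equiv.Perm (Fin k)) :
    (∃ e : {f : ↥(pointSet π) → ↥(pointSet σ) // IsGuide σ π f} ≃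
        {g : Fin k → Fin n // IsOccurrence σ π g},
      ∀ (f : {f : ↥(pointSet π) → ↥(pointSet σ) // IsGuide σ π f}) (i : Fin k),
        (e f).1 i = (f.1 (pt π i)).1.1) ∧
    Nat.card {f : ↥(pointSet π) → ↥(pointSet σ) // IsGuide σ π f} =
      Nat.card {g : Fin k → Fin n // IsOccurrence σ π g} := by
  let e : {f : ↥(pointSet π) → ↥(pointSet σ) // IsGuide σ π f} ≃
      {g : Fin k → Fin n // IsOccurrence σ π g} :=
    { toFun := fun f => ⟨fun i => (f.1 (pt π i)).1.1, isOcc_of_guide σ π f.1 f.2⟩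
      invFun := fun g => ⟨fOfOcc σ π g.1, isGuide_fOfOcc σ π g.1 g.2⟩
      left_inv := by
        rintro ⟨f, hf⟩
        apply Subtype.ext
        funext p
        apply Subtype.ext
        show ((f (pt π p.1.1)).1.1, σ (f (pt π p.1.1)).1.1) = (f p).1
        rw [pt_eq_self π p]
        exact Prod.ext rfl (f p).2.symm
      right_inv := by
        rintro ⟨g, hg⟩
        rfl }
  exact ⟨⟨e, fun f i => rfl⟩, Nat.card_congr e⟩
end

section
/- Let G be a finite simple graph on k vertices with maximum degree at most 4. Then there exists a finite simple graph G' on at most 2k vertices with maximum degree at most 3, together with a set M of pairwise disjoint edges of G', such that contracting the edges of M in G' yields a graph isomorphic to G. In particular, G is a minor of a graph on at most 2k vertices of maximum degree 3. -/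
/-- The quotient graph of a simple graph `H` by an equivalence relation `ρ` on its vertices:
vertices are the equivalence classes, and two distinct classes are adjacent iff some
representative of one is adjacent in `H` to some representative of the other. -/
def quotientGraph {V : Type*} (H : SimpleGraph V) (ρ : Setoid V) :
    SimpleGraph (Quotient ρ) where
  Adj x y := x ≠ y ∧ ∃ a b : V, Quotient.mk ρ a = x ∧ Quotient.mk ρ b = y ∧ H.Adj a b
  symm := by
    constructor
    rintro x y ⟨hxy, a, b, ha, hb, hab⟩
    exact ⟨hxy.symm, b, a, hb, ha, hab.symm⟩
  loopless := by
    constructor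
    rintro x ⟨hx, -⟩
    exact hx rfl

/-- Every finite simple graph `G` on `k` vertices with maximum degree at most `4` can be
obtained, up to isomorphism, by contracting a set of pairwise disjoint edges (given here by
the equivalence relation `s`, each of whose classes is either a single vertex or the pair of
endpoints of an edge) in a finite simple graph `G'` on at most `2k` vertices with maximum
degree at most `3`.  In particular, `G` is a minor of a graph on at most `2k` vertices of
maximum degree `3`. -/
theorem degree_four_graph_is_contraction_of_subcubic (V : Type) [Fintype V] (k : ℕ)
    (hcard : Fintype.card V = k) (G : SimpleGraph V)
    (hdeg : ∀ v : V, (G.neighborSet v).ncard ≤ 4) :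
    ∃ (V' : Type) (_ : Fintype V') (G' : SimpleGraph V') (s : Setoid V'),
      Fintype.card V' ≤ 2 * k ∧
      (∀ v : V', (G'.neighborSet v).ncard ≤ 3) ∧
      -- each class of `s` is a single vertex or the two endpoints of an edge of `G'`:
      (∀ a b : V', s.r a b → a = b ∨ G'.Adj a b) ∧
      (∀ a b c : V', s.r a b → s.r a c → b = c ∨ b = a ∨ c = a) ∧
      Nonempty (quotientGraph G' s ≃g G) := by
  classical
  -- For each vertex `u`, an injection of its neighbor set into `Fin 4`.
  have hinj : ∀ u : V, ∃ f : (G.neighborSet u) → Fin 4, Function.Injective f := by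
    intro u
    have h1 : Fintype.card (G.neighborSet u) ≤ 4 := by
      have := hdeg u
      rwa [Set.ncard_eq_toFinset_card', Set.toFinset_card] at this
    have h2 : Fintype.card (G.neighborSet u) ≤ Fintype.card (Fin 4) := by simpa using h1
    obtain ⟨f⟩ := Function.Embedding.nonempty_of_card_le h2
    exact ⟨f, f.injective⟩
  choose f hf using hinj
  -- the side of `u` at which the edge `uv` is attached
  set σ : V → V → Bool := fun u v =>
    if h : G.Adj u v then decide (((f u ⟨v, h⟩ : Fin 4) : ℕ) < 2) else false with hσ
  -- each side receives at most 2 edges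
  have fiber : ∀ (u : V) (i : Bool), {v | G.Adj u v ∧ σ u v = i}.ncard ≤ 2 := by
    intro u i
    have h2 : ({0, 1} : Set ℕ).ncard = 2 := by
      rw [Set.ncard_pair (by norm_num)]
    calc {v | G.Adj u v ∧ σ u v = i}.ncard
        ≤ ({0, 1} : Set ℕ).ncard := by
          apply Set.ncard_le_ncard_of_injOn
            (fun v => if h : G.Adj u v then ((f u ⟨v, h⟩ : Fin 4) : ℕ) % 2 else 0)
          · rintro v ⟨hv, -⟩
            simp only [dif_pos hv]
            have := Nat.mod_two_eq_zero_or_one ((f u ⟨v, hv⟩ : Fin 4) : ℕ)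
            rcases this with h | h <;> simp [h]
          · rintro v ⟨hv, hvi⟩ w ⟨hw, hwi⟩ heq
            simp only [dif_pos hv, dif_pos hw] at heq
            have hvi' : σ u v = i := hvi
            have hwi' : σ u w = i := hwi
            rw [hσ] at hvi' hwi'
            simp only [dif_pos hv, dif_pos hw] at hvi' hwi'
            have hside : (((f u ⟨v, hv⟩ : Fin 4) : ℕ) < 2) ↔ (((f u ⟨w, hw⟩ : Fin 4) : ℕ) < 2) := by
              have := hvi'.trans hwi'.symm
              rwa [decide_eq_decide] at this
            have hv4 : ((f u ⟨v, hv⟩ : Fin 4) : ℕ) < 4 := (f u ⟨v, hv⟩).isLt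
            have hw4 : ((f u ⟨w, hw⟩ : Fin 4) : ℕ) < 4 := (f u ⟨w, hw⟩).isLt
            have : ((f u ⟨v, hv⟩ : Fin 4) : ℕ) = ((f u ⟨w, hw⟩ : Fin 4) : ℕ) := by omega
            have : f u ⟨v, hv⟩ = f u ⟨w, hw⟩ := Fin.ext this
            have := hf u this
            exact congrArg Subtype.val this
      _ = 2 := h2
  -- the subcubic graph on `V × Bool`
  set G' : SimpleGraph (V × Bool) :=
    { Adj := fun p q => (p.1 = q.1 ∧ p.2 ≠ q.2) ∨
        (G.Adj p.1 q.1 ∧ p.2 = σ p.1 q.1 ∧ q.2 = σ q.1 p.1)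
      symm := by
        constructor
        rintro p q (⟨h1, h2⟩ | ⟨h1, h2, h3⟩)
        · exact Or.inl ⟨h1.symm, h2.symm⟩
        · exact Or.inr ⟨h1.symm, h3, h2⟩
      loopless := by
        constructor
        rintro p (⟨-, h⟩ | ⟨h, -⟩)
        · exact h rfl
        · exact G.irrefl h } with hG'
  set s : Setoid (V × Bool) :=
    ⟨fun a b => a.1 = b.1, ⟨fun _ => rfl, Eq.symm, Eq.trans⟩⟩ with hs
  refine ⟨V × Bool, inferInstance, G', s, ?_, ?_, ?_, ?_, ?_⟩
  · simp [Fintype.card_prod, hcard, Nat.mul_comm]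
  · -- degree bound
    rintro ⟨u, i⟩
    have hsub : G'.neighborSet (u, i) ⊆
        insert (u, !i) ((fun v => (v, σ v u)) '' {v | G.Adj u v ∧ σ u v = i}) := by
      rintro ⟨v, j⟩ (⟨h1, h2⟩ | ⟨h1, h2, h3⟩)
      · left
        simp only at h1 h2
        subst h1
        have : j = !i := by cases i <;> cases j <;> simp_all
        rw [this]
      · right
        simp only at h1 h2 h3
        exact ⟨v, ⟨h1, h2.symm⟩, by rw [h3]⟩
    calc (G'.neighborSet (u, i)).ncard
        ≤ (insert (u, !i) ((fun v => (v, σ v u)) '' {v | G.Adj u v ∧ σ u v = i})).ncard :=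
          Set.ncard_le_ncard hsub (Set.toFinite _)
      _ ≤ ((fun v => (v, σ v u)) '' {v | G.Adj u v ∧ σ u v = i}).ncard + 1 :=
          Set.ncard_insert_le _ _
      _ ≤ {v | G.Adj u v ∧ σ u v = i}.ncard + 1 := by
          gcongr
          exact Set.ncard_image_le (Set.toFinite _)
      _ ≤ 2 + 1 := by gcongr; exact fiber u i
      _ = 3 := rfl
  · -- classes are vertices or edges
    rintro ⟨a, i⟩ ⟨b, j⟩ hab
    have hab' : a = b := hab
    subst hab'
    by_cases hij : i = j
    · exact Or.inl (by rw [hij])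
    · exact Or.inr (Or.inl ⟨rfl, hij⟩)
  · -- classes have at most 2 elements
    rintro ⟨a, i⟩ ⟨b, j⟩ ⟨c, l⟩ hab hac
    have hab' : a = b := hab
    have hac' : a = c := hac
    subst hab'; subst hac'
    cases i <;> cases j <;> cases l <;> simp
  · -- the isomorphism
    refine ⟨?_⟩
    refine ⟨⟨Quotient.lift (fun p : V × Bool => p.1) (fun a b h => h),
      fun v => Quotient.mk s (v, false), ?_, fun v => rfl⟩, ?_⟩
    · intro x
      induction x using Quotient.inductionOn with
      | h p => exact Quotient.sound (rfl : p.1 = p.1)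
    · intro x y
      induction x using Quotient.inductionOn with
      | h p =>
      induction y using Quotient.inductionOn with
      | h q =>
      show G.Adj p.1 q.1 ↔ _
      constructor
      · intro h
        refine ⟨?_, (p.1, σ p.1 q.1), (q.1, σ q.1 p.1), ?_, ?_, ?_⟩
        · intro heq
          have : p.1 = q.1 := Quotient.exact heq
          rw [this] at h
          exact G.irrefl h
        · exact Quotient.sound (rfl : p.1 = p.1)
        · exact Quotient.sound (rfl : q.1 = q.1)
        · exact Or.inr ⟨h, rfl, rfl⟩
      · rintro ⟨hne, a, b, ha, hb, hab⟩
        have ha' : a.1 = p.1 := Quotient.exact ha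
        have hb' : b.1 = q.1 := Quotient.exact hb
        rcases hab with ⟨h1, -⟩ | ⟨h1, -, -⟩
        · exfalso
          apply hne
          rw [← ha, ← hb]
          exact Quotient.sound (h1 : a.1 = b.1)
        · rwa [ha', hb'] at h1
end
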